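/- The odd-dimensional sphere S^{2k-1} can be covered by 2k+2 open sets, none containing a pair of antipodal points, such that every point of the sphere is contained in at most k+1 of the sets. -/

import Mathlib

open Set Metric

namespace OddSphereCoverAux

variable (k : ℕ)

/-- The `2k+1` "base" functions: the `2k` coordinates and one zero function
(indexed by `i : Fin (2k+2)` with `(i:ℕ) ≤ 2k`; value for the last index is also `0`
but that index is excluded from the label set `L`). -/
noncomputable def yF (i : Fin (2 * k + 2)) (x : EuclideanSpace ℝ (Fin (2 * k))) : ℝ :=
  if h : (i : ℕ) < 2 * k then x ⟨(i : ℕ), h⟩ else 0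

/-- The label set of the base functions. -/
def L : Finset (Fin (2 * k + 2)) := Finset.univ.filter (fun i => (i : ℕ) ≤ 2 * k)

lemma yF_continuous (i : Fin (2 * k + 2)) : Continuous (yF k i) := by
  unfold yF
  split
  · exact (EuclideanSpace.proj _).continuous
  · exact continuous_const

lemma yF_neg (i : Fin (2 * k + 2)) (x : EuclideanSpace ℝ (Fin (2 * k))) :
    yF k i (-x) = - yF k i x := by
  unfold yF
  split
  · rfl
  · simp

lemma yF_le_norm (i : Fin (2 * k + 2)) (x : EuclideanSpace ℝ (Fin (2 * k))) :
    yF k i x ≤ ‖x‖ := by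
  unfold yF
  split
  · calc x ⟨(i : ℕ), by assumption⟩ ≤ |x ⟨(i : ℕ), by assumption⟩| := le_abs_self _
      _ ≤ ‖x‖ := by
        rw [EuclideanSpace.norm_eq]
        rw [← Real.sqrt_sq (abs_nonneg _)]
        apply Real.sqrt_le_sqrt
        rw [sq_abs]
        calc (x ⟨(i:ℕ), by assumption⟩)^2
            ≤ ∑ j, (x j)^2 := by
              apply Finset.single_le_sum (f := fun j => (x j)^2)
              · intro j _; positivity
              · exact Finset.mem_univ _
          _ = ∑ j, ‖x j‖^2 := by simp [Real.norm_eq_abs, sq_abs]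
  · positivity

/-- The "bad" set: points of the sphere where `k+1` of the base functions are tied
at the common maximum of the base functions. -/
def B : Set (EuclideanSpace ℝ (Fin (2 * k))) :=
  {x | ‖x‖ = 1 ∧ ∃ T : Finset (Fin (2 * k + 2)), T ⊆ L k ∧ T.card = k + 1 ∧
    ∃ c₀ ∈ T, (∀ i ∈ T, yF k i x = yF k c₀ x) ∧ (∀ i ∈ L k, yF k i x ≤ yF k c₀ x)}

lemma card_L : (L k).card = 2 * k + 1 := by
  have : L k = Finset.univ.erase (Fin.last (2 * k + 1)) := by
    ext i
    simp only [L, Finset.mem_filter, Finset.mem_univ, true_and, Finset.mem_erase, and_true]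
    constructor
    · intro h he
      rw [he] at h
      simp [Fin.last] at h
    · intro h
      have := i.isLt
      rcases Nat.lt_or_ge (i : ℕ) (2 * k + 1) with h' | h'
      · omega
      · exfalso; apply h; apply Fin.ext; simp [Fin.last]; omega
  rw [this, Finset.card_erase_of_mem (Finset.mem_univ _)]
  simp

end OddSphereCoverAux

namespace OddSphereCoverAux
variable (k : ℕ)

/-- The index `2k`, which belongs to `L` and has `yF = 0`. -/
def zIdx : Fin (2 * k + 2) := ⟨2 * k, by omega⟩

lemma zIdx_mem_L : zIdx k ∈ L k := by simp [zIdx, L]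

lemma yF_zIdx (x : EuclideanSpace ℝ (Fin (2 * k))) : yF k (zIdx k) x = 0 := by
  simp [yF, zIdx]

lemma coordIdx_mem_L (j : Fin (2 * k)) : (⟨(j : ℕ), by omega⟩ : Fin (2 * k + 2)) ∈ L k := by
  have := j.isLt
  simp only [L, Finset.mem_filter, Finset.mem_univ, true_and]
  omega

lemma yF_coordIdx (j : Fin (2 * k)) (x : EuclideanSpace ℝ (Fin (2 * k))) :
    yF k (⟨(j : ℕ), by omega⟩ : Fin (2 * k + 2)) x = x j := by
  have hj := j.isLt
  simp only [yF]
  rw [dif_pos hj]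

lemma B_neg_disjoint (x : EuclideanSpace ℝ (Fin (2 * k))) (hx : x ∈ B k) (hnx : -x ∈ B k) :
    False := by
  obtain ⟨hx1, T₁, hT₁L, hT₁c, c₁, hc₁, hT₁eq, hT₁le⟩ := hx
  obtain ⟨_, T₂, hT₂L, hT₂c, c₂, hc₂, hT₂eq, hT₂le⟩ := hnx
  set M := yF k c₁ x with hM
  have hT₂eq' : ∀ i ∈ T₂, yF k i x = yF k c₂ x := by
    intro i hi
    have := hT₂eq i hi
    rw [yF_neg, yF_neg] at this
    linarith
  have hT₂ge' : ∀ i ∈ L k, yF k c₂ x ≤ yF k i x := by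
    intro i hi
    have := hT₂le i hi
    rw [yF_neg, yF_neg] at this
    linarith
  set m := yF k c₂ x with hm
  by_cases hMm : M = m
  · -- all base values equal, hence all zero, hence x = 0
    have hall : ∀ i ∈ L k, yF k i x = M := by
      intro i hi
      have h1 : yF k i x ≤ M := hT₁le i hi
      have h2 : m ≤ yF k i x := hT₂ge' i hi
      rw [← hMm] at h2
      linarith
    have hM0 : M = 0 := by
      have := hall (zIdx k) (zIdx_mem_L k)
      rw [yF_zIdx] at this
      exact this.symm
    have hx0 : x = 0 := by
      ext j
      have := hall _ (coordIdx_mem_L k j)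
      rw [yF_coordIdx, hM0] at this
      simpa using this
    rw [hx0] at hx1
    simp at hx1
  · -- two disjoint (k+1)-subsets of L, impossible since |L| = 2k+1
    have hdisj : Disjoint T₁ T₂ := by
      rw [Finset.disjoint_left]
      intro i hi1 hi2
      apply hMm
      have e1 := hT₁eq i hi1
      have e2 := hT₂eq' i hi2
      rw [← e1, e2]
    have hsub : T₁ ∪ T₂ ⊆ L k := Finset.union_subset hT₁L hT₂L
    have hcard := Finset.card_le_card hsub
    rw [Finset.card_union_of_disjoint hdisj, hT₁c, hT₂c, card_L] at hcard
    omega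

end OddSphereCoverAux

namespace OddSphereCoverAux
variable (k : ℕ)

lemma isClosed_B : IsClosed (B k) := by
  have hrw : B k = ⋃ T ∈ (L k).powersetCard (k + 1), ⋃ c₀ ∈ T,
      ({x : EuclideanSpace ℝ (Fin (2 * k)) | ‖x‖ = 1}
        ∩ (⋂ i ∈ T, {x | yF k i x = yF k c₀ x})
        ∩ (⋂ i ∈ L k, {x | yF k i x ≤ yF k c₀ x})) := by
    ext x
    simp only [B, mem_setOf_eq, mem_iUnion, Finset.mem_powersetCard, mem_inter_iff,
      mem_iInter, exists_prop]
    constructor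
    · rintro ⟨h1, T, hTL, hTc, c₀, hc₀, heq, hle⟩
      exact ⟨T, ⟨hTL, hTc⟩, c₀, hc₀, ⟨⟨h1, heq⟩, hle⟩⟩
    · rintro ⟨T, ⟨hTL, hTc⟩, c₀, hc₀, ⟨⟨h1, heq⟩, hle⟩⟩
      exact ⟨h1, T, hTL, hTc, c₀, hc₀, heq, hle⟩
  rw [hrw]
  apply isClosed_biUnion_finset
  intro T _
  apply isClosed_biUnion_finset
  intro c₀ _
  apply IsClosed.inter
  apply IsClosed.inter
  · exact isClosed_eq continuous_norm continuous_const
  · exact isClosed_biInter fun i _ =>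
      isClosed_eq (yF_continuous k i) (yF_continuous k c₀)
  · exact isClosed_biInter fun i _ =>
      isClosed_le (yF_continuous k i) (yF_continuous k c₀)

lemma isClosed_negB : IsClosed ((fun x => -x) ⁻¹' (B k)) :=
  (isClosed_B k).preimage continuous_neg

lemma disjoint_negB_B : Disjoint ((fun x => -x) ⁻¹' (B k)) (B k) := by
  rw [Set.disjoint_left]
  intro x hx1 hx2
  exact B_neg_disjoint k x hx2 hx1

/-- The Urysohn function: `0` on `-B`, `1` on `B`. -/
noncomputable def phi : C(EuclideanSpace ℝ (Fin (2 * k)), ℝ) :=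
  (exists_continuous_zero_one_of_isClosed (isClosed_negB k) (isClosed_B k)
    (disjoint_negB_B k)).choose

lemma phi_spec : Set.EqOn (phi k) 0 ((fun x => -x) ⁻¹' (B k)) ∧
    Set.EqOn (phi k) 1 (B k) ∧ ∀ x, (phi k) x ∈ Icc (0:ℝ) 1 :=
  (exists_continuous_zero_one_of_isClosed (isClosed_negB k) (isClosed_B k)
    (disjoint_negB_B k)).choose_spec

/-- The dominator function. -/
noncomputable def D (x : EuclideanSpace ℝ (Fin (2 * k))) : ℝ :=
  2 * phi k x - 2 * phi k (-x)

lemma D_continuous : Continuous (D k) := by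
  unfold D
  exact ((continuous_const.mul (phi k).continuous).sub
    (continuous_const.mul ((phi k).continuous.comp continuous_neg)))

lemma D_neg (x : EuclideanSpace ℝ (Fin (2 * k))) : D k (-x) = - D k x := by
  unfold D
  rw [neg_neg]
  ring

lemma D_eq_two_on_B (x : EuclideanSpace ℝ (Fin (2 * k))) (hx : x ∈ B k) : D k x = 2 := by
  have h1 : phi k x = 1 := (phi_spec k).2.1 hx
  have h0 : phi k (-x) = 0 := by
    have : (-x) ∈ (fun x => -x) ⁻¹' (B k) := by
      simp only [mem_preimage, neg_neg]
      exact hx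
    exact (phi_spec k).1 this
  unfold D
  rw [h1, h0]
  ring

/-- The full family of `2k+2` odd functions. -/
noncomputable def F (i : Fin (2 * k + 2)) (x : EuclideanSpace ℝ (Fin (2 * k))) : ℝ :=
  if (i : ℕ) ≤ 2 * k then yF k i x else D k x

lemma F_continuous (i : Fin (2 * k + 2)) : Continuous (F k i) := by
  unfold F
  split
  · exact yF_continuous k i
  · exact D_continuous k

lemma F_neg (i : Fin (2 * k + 2)) (x : EuclideanSpace ℝ (Fin (2 * k))) :
    F k i (-x) = - F k i x := by
  unfold F
  split
  · exact yF_neg k i x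
  · exact D_neg k x

lemma F_eq_yF_of_mem_L (i : Fin (2 * k + 2)) (hi : i ∈ L k)
    (x : EuclideanSpace ℝ (Fin (2 * k))) : F k i x = yF k i x := by
  simp only [L, Finset.mem_filter, Finset.mem_univ, true_and] at hi
  unfold F
  rw [if_pos hi]

/-- The ambient open sets. -/
noncomputable def V (a : Fin (2 * k + 2)) : Set (EuclideanSpace ℝ (Fin (2 * k))) :=
  {x | ∃ T : Finset (Fin (2 * k + 2)), T.card = k + 1 ∧ ∀ b ∉ T, F k b x < F k a x}

lemma isOpen_V (a : Fin (2 * k + 2)) : IsOpen (V k a) := by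
  have hrw : V k a = ⋃ (T : Finset (Fin (2 * k + 2))) (_ : T.card = k + 1),
      ⋂ (b) (_ : b ∉ T), {x | F k b x < F k a x} := by
    ext x
    simp only [V, mem_setOf_eq, mem_iUnion, mem_iInter, exists_prop]
  rw [hrw]
  apply isOpen_iUnion
  intro T
  apply isOpen_iUnion
  intro _
  apply isOpen_iInter_of_finite
  intro b
  apply isOpen_iInter_of_finite
  intro _
  exact isOpen_lt (F_continuous k b) (F_continuous k a)

end OddSphereCoverAux

namespace OddSphereCoverAux
variable (k : ℕ)

lemma lastIdx_not_le : ¬ ((Fin.last (2 * k + 1) : ℕ) ≤ 2 * k) := by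
  simp [Fin.last]

lemma cover_lemma (x : EuclideanSpace ℝ (Fin (2 * k))) (hx : ‖x‖ = 1) :
    ∃ a, x ∈ V k a := by
  obtain ⟨a₀, _, hmax⟩ := Finset.exists_max_image Finset.univ (fun b => F k b x)
    ⟨⟨0, by omega⟩, Finset.mem_univ _⟩
  set G : Finset (Fin (2 * k + 2)) :=
    Finset.univ.filter (fun b => F k a₀ x ≤ F k b x) with hG
  by_cases hGc : G.card ≤ k + 1
  · -- extend G to a set of size exactly k+1
    obtain ⟨T, _, hTu, hTc⟩ := Finset.exists_subsuperset_card_eq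
      (G.subset_univ) (by omega : G.card ≤ k + 1)
      (by simp [Fintype.card_fin]; omega : k + 1 ≤ Finset.univ.card)
    refine ⟨a₀, T, hTc, ?_⟩
    intro b hb
    have hbG : b ∉ G := fun h => hb (‹G ⊆ T› h)
    rw [hG, Finset.mem_filter] at hbG
    push_neg at hbG
    exact hbG (Finset.mem_univ _)
  · -- impossible: this would give x ∈ B, whence D x = 2 > 1
    exfalso
    push_neg at hGc
    set lst := Fin.last (2 * k + 1) with hlst
    have hG' : k + 1 ≤ (G.erase lst).card := by
      have := Finset.pred_card_le_card_erase (a := lst) (s := G)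
      omega
    obtain ⟨T, hTG, hTc⟩ := Finset.exists_subset_card_eq hG'
    have hTL : T ⊆ L k := by
      intro i hi
      have hi' := hTG hi
      have hine : i ≠ lst := Finset.ne_of_mem_erase hi'
      have hilt := i.isLt
      simp only [L, Finset.mem_filter, Finset.mem_univ, true_and]
      by_contra hle
      apply hine
      apply Fin.ext
      simp [hlst, Fin.last]
      omega
    have hTG2 : T ⊆ G := hTG.trans (Finset.erase_subset _ _)
    have hval : ∀ i ∈ T, F k i x = F k a₀ x := by
      intro i hi
      have h1 : F k a₀ x ≤ F k i x := by
        have := hTG2 hi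
        rw [hG, Finset.mem_filter] at this
        exact this.2
      have h2 : F k i x ≤ F k a₀ x := hmax i (Finset.mem_univ _)
      linarith
    obtain ⟨c₀, hc₀⟩ : T.Nonempty := Finset.card_pos.mp (by omega)
    have hxB : x ∈ B k := by
      refine ⟨hx, T, hTL, hTc, c₀, hc₀, ?_, ?_⟩
      · intro i hi
        rw [← F_eq_yF_of_mem_L k i (hTL hi), ← F_eq_yF_of_mem_L k c₀ (hTL hc₀)]
        rw [hval i hi, hval c₀ hc₀]
      · intro i hi
        rw [← F_eq_yF_of_mem_L k i hi, ← F_eq_yF_of_mem_L k c₀ (hTL hc₀)]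
        rw [hval c₀ hc₀]
        exact hmax i (Finset.mem_univ _)
    have hD2 : D k x = 2 := D_eq_two_on_B k x hxB
    have hFlst : F k lst x = D k x := by
      unfold F
      rw [if_neg (lastIdx_not_le k)]
    have h2le : (2:ℝ) ≤ F k a₀ x := by
      rw [← hD2, ← hFlst]
      exact hmax lst (Finset.mem_univ _)
    have hle1 : F k a₀ x ≤ 1 := by
      rw [← hval c₀ hc₀, F_eq_yF_of_mem_L k c₀ (hTL hc₀)]
      calc yF k c₀ x ≤ ‖x‖ := yF_le_norm k c₀ x
        _ = 1 := hx
    linarith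

lemma antipode_lemma (a : Fin (2 * k + 2)) (x : EuclideanSpace ℝ (Fin (2 * k)))
    (hx : x ∈ V k a) (hnx : -x ∈ V k a) : False := by
  obtain ⟨T₁, hT₁c, hT₁⟩ := hx
  obtain ⟨T₂, hT₂c, hT₂⟩ := hnx
  have hT₂' : ∀ b ∉ T₂, F k a x < F k b x := by
    intro b hb
    have := hT₂ b hb
    rw [F_neg, F_neg] at this
    linarith
  have huniv : T₁ ∪ T₂ = Finset.univ := by
    apply Finset.eq_univ_of_forall
    intro b
    by_contra hb
    rw [Finset.mem_union] at hb
    push_neg at hb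
    have h1 := hT₁ b hb.1
    have h2 := hT₂' b hb.2
    linarith
  have hcard := Finset.card_union_add_card_inter T₁ T₂
  rw [huniv, hT₁c, hT₂c] at hcard
  simp only [Finset.card_univ, Fintype.card_fin] at hcard
  have hint : (T₁ ∩ T₂).card = 0 := by omega
  rw [Finset.card_eq_zero] at hint
  have ha : a ∈ T₁ ∪ T₂ := huniv ▸ Finset.mem_univ a
  rw [Finset.mem_union] at ha
  rcases ha with ha | ha
  · have ha2 : a ∉ T₂ := by
      intro h
      have : a ∈ T₁ ∩ T₂ := Finset.mem_inter.mpr ⟨ha, h⟩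
      rw [hint] at this
      exact absurd this (Finset.notMem_empty a)
    exact absurd (hT₂' a ha2) (lt_irrefl _)
  · by_cases ha1 : a ∈ T₁
    · have : a ∈ T₁ ∩ T₂ := Finset.mem_inter.mpr ⟨ha1, ha⟩
      rw [hint] at this
      exact absurd this (Finset.notMem_empty a)
    · exact absurd (hT₁ a ha1) (lt_irrefl _)

lemma mult_lemma (x : EuclideanSpace ℝ (Fin (2 * k))) :
    {i : Fin (2 * k + 2) | x ∈ V k i}.ncard ≤ k + 1 := by
  classical
  set W : Finset (Fin (2 * k + 2)) := Finset.univ.filter (fun i => x ∈ V k i) with hW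
  have hset : {i : Fin (2 * k + 2) | x ∈ V k i} = ↑W := by
    ext i
    simp [hW]
  rw [hset, Set.ncard_coe_finset]
  rcases Finset.eq_empty_or_nonempty W with hWe | hWne
  · rw [hWe]; simp
  · obtain ⟨i₀, hi₀W, hmin⟩ := Finset.exists_min_image W (fun i => F k i x) hWne
    have hi₀V : x ∈ V k i₀ := by
      rw [hW, Finset.mem_filter] at hi₀W
      exact hi₀W.2
    obtain ⟨T, hTc, hT⟩ := hi₀V
    have hWT : W ⊆ T := by
      intro i hi
      by_contra hiT
      have h1 := hT i hiT
      have h2 := hmin i hi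
      linarith
    calc W.card ≤ T.card := Finset.card_le_card hWT
      _ = k + 1 := hTc

end OddSphereCoverAux

/-- The odd-dimensional sphere `S^{2k-1}` (the unit sphere in `ℝ^{2k}`, `k ≥ 1`)
can be covered by `2k+2` open sets, none containing a pair of antipodal points,
such that every point of the sphere is in at most `k+1` of the sets. -/
theorem odd_sphere_cover (k : ℕ) (hk : 1 ≤ k) :
    ∃ U : Fin (2 * k + 2) → Set (EuclideanSpace ℝ (Fin (2 * k))),
      (∀ i, ∃ V, IsOpen V ∧ U i = V ∩ Metric.sphere 0 1) ∧
      (Metric.sphere (0 : EuclideanSpace ℝ (Fin (2 * k))) 1 ⊆ ⋃ i, U i) ∧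
      (∀ i, ∀ x, x ∈ U i → -x ∉ U i) ∧
      (∀ x ∈ Metric.sphere (0 : EuclideanSpace ℝ (Fin (2 * k))) 1,
        {i : Fin (2 * k + 2) | x ∈ U i}.ncard ≤ k + 1) := by
  refine ⟨fun i => OddSphereCoverAux.V k i ∩ Metric.sphere 0 1, ?_, ?_, ?_, ?_⟩
  · intro i
    exact ⟨OddSphereCoverAux.V k i, OddSphereCoverAux.isOpen_V k i, rfl⟩
  · intro x hx
    have hx' : ‖x‖ = 1 := mem_sphere_zero_iff_norm.mp hx
    obtain ⟨a, ha⟩ := OddSphereCoverAux.cover_lemma k x hx'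
    exact Set.mem_iUnion.mpr ⟨a, ha, hx⟩
  · intro i x hx hnx
    exact OddSphereCoverAux.antipode_lemma k i x hx.1 hnx.1
  · intro x _
    have hsub : {i : Fin (2 * k + 2) | x ∈ OddSphereCoverAux.V k i ∩ Metric.sphere 0 1}
        ⊆ {i : Fin (2 * k + 2) | x ∈ OddSphereCoverAux.V k i} := by
      intro i hi
      exact hi.1
    calc {i : Fin (2 * k + 2) | x ∈ OddSphereCoverAux.V k i ∩ Metric.sphere 0 1}.ncard
        ≤ {i : Fin (2 * k + 2) | x ∈ OddSphereCoverAux.V k i}.ncard :=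
          Set.ncard_le_ncard hsub (Set.toFinite _)
      _ ≤ k + 1 := OddSphereCoverAux.mult_lemma k x
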